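/- For n ≥ 1 (interior case) or n ≤ -2 (exterior case), and indices m₁, m₂ in the admissible ranges with (n₁,m₁) ≠ (n₂,m₂) or mixed parities ±/∓, the basic monogenics and antimonogenics satisfy ⟨X̄_{n₁,m₁}^{+}, X_{n₂,m₂}^{-}⟩ = ⟨X̄_{n₁,m₁}^{-}, X_{n₂,m₂}^{+}⟩ = 0 in the L² inner product on the respective domain. -/

import Mathlib

open MeasureTheory Real

noncomputable section

/-- Euclidean space `ℝ³` with coordinates `x 0, x 1, x 2`. -/
abbrev E3 := EuclideanSpace ℝ (Fin 3)

/-- Legendre polynomial of degree `n` via Rodrigues' formula. -/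
def legendreP (n : ℕ) (t : ℝ) : ℝ :=
  (1 / (2 ^ n * n.factorial : ℝ)) * iteratedDeriv n (fun s : ℝ => (s ^ 2 - 1) ^ n) t

/-- Associated Legendre function of nonnegative integer degree `n` and order `m`
(Ferrers-type definition, no Condon–Shortley phase):
`P_n^m(t) = (1-t²)^{m/2} (d/dt)^m P_n(t)`. -/
def assocLegendreNat (n m : ℕ) (t : ℝ) : ℝ :=
  (1 - t ^ 2) ^ ((m : ℝ) / 2) * iteratedDeriv m (legendreP n) t

/-- Associated Legendre function of arbitrary integer degree, using the
reflection `P_{-n}^m = P_{n-1}^m` for negative degrees. -/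
def assocLegendre (n : ℤ) (m : ℕ) (t : ℝ) : ℝ :=
  if 0 ≤ n then assocLegendreNat n.toNat m t else assocLegendreNat (-n - 1).toNat m t

/-- Spherical radius `ρ`. -/
def sphRho (x : E3) : ℝ := Real.sqrt (x 0 ^ 2 + x 1 ^ 2 + x 2 ^ 2)

/-- Azimuthal angle `φ` of the point `(x₁, x₂)`. -/
def sphPhi (x : E3) : ℝ := Complex.arg ⟨x 1, x 2⟩

/-- Azimuthal factor `Φ_m^±(φ)`; `sgn = true` corresponds to `+` (cosine),
`sgn = false` to `−` (sine). -/
def PhiFac (m : ℕ) (sgn : Bool) (φ : ℝ) : ℝ :=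
  if sgn then Real.cos (m * φ) else Real.sin (m * φ)

/-- Solid spherical harmonic `U_{n,m}^{±}(x) = ρ^n P_n^m(cos θ) Φ_m^{±}(φ)`. -/
def solidU (n : ℤ) (m : ℕ) (sgn : Bool) (x : E3) : ℝ :=
  sphRho x ^ n * assocLegendre n m (x 0 / sphRho x) * PhiFac m sgn (sphPhi x)

/-- The exterior `B^e` of the closed unit ball in `ℝ³`. -/
def extB : Set E3 := {x : E3 | 1 < ‖x‖}

/-- The quaternions; the subspace `𝒜 = ℝ + ℝe₁ + ℝe₂` consists of those
quaternions with `imK = 0`. -/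
abbrev H := Quaternion ℝ

def qe1 : H := ⟨0, 1, 0, 0⟩
def qe2 : H := ⟨0, 0, 1, 0⟩

/-- Partial derivative `∂/∂xᵢ` of a quaternion-valued function. -/
def pd (i : Fin 3) (f : E3 → H) (x : E3) : H :=
  fderiv ℝ f x (EuclideanSpace.single i 1)

/-- The Cauchy–Riemann (Fueter) operator `∂̄ = ∂/∂x₀ + e₁∂/∂x₁ + e₂∂/∂x₂`. -/
def Dbar (f : E3 → H) (x : E3) : H := pd 0 f x + qe1 * pd 1 f x + qe2 * pd 2 f x

/-- The conjugate Fueter operator `∂ = ∂/∂x₀ − e₁∂/∂x₁ − e₂∂/∂x₂`. -/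
def Dop (f : E3 → H) (x : E3) : H := pd 0 f x - qe1 * pd 1 f x - qe2 * pd 2 f x

/-- The solid harmonic `U_{n,m}^±` regarded as a quaternion-valued function. -/
def solidUq (n : ℤ) (m : ℕ) (sgn : Bool) (x : E3) : H := ((solidU n m sgn x : ℝ) : H)

/-- The basic spherical monogenic `X_{n,m}^{±} = ∂U_{n+1,m}^{±}`. -/
def Xmon (n : ℤ) (m : ℕ) (sgn : Bool) : E3 → H := Dop (solidUq (n + 1) m sgn)

/-- The scalar inner product on `𝒜`-valued quaternions:
`⟨p,q⟩ = p₀q₀ + p₁q₁ + p₂q₂`. -/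
def qip (p q : H) : ℝ := p.re * q.re + p.imI * q.imI + p.imJ * q.imJ

/-! ### Auxiliary development: the reflection `x₂ ↦ -x₂` -/

/-- The reflection of `ℝ³` negating the last coordinate, as a linear equivalence. -/
def sigmaL : E3 ≃ₗ[ℝ] E3 where
  toFun x := WithLp.toLp 2 (fun i => if i = 2 then -x i else x i)
  invFun x := WithLp.toLp 2 (fun i => if i = 2 then -x i else x i)
  left_inv x := by ext i; by_cases h : i = 2 <;> simp [h]
  right_inv x := by ext i; by_cases h : i = 2 <;> simp [h]
  map_add' x y := by
    ext i
    by_cases h : i = 2 <;> simp [h, PiLp.add_apply] <;> ring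
  map_smul' c x := by
    ext i
    by_cases h : i = 2 <;> simp [h, PiLp.smul_apply, smul_eq_mul] <;> ring

@[simp] lemma sigmaL_apply (x : E3) (i : Fin 3) :
    sigmaL x i = if i = 2 then -x i else x i := rfl

/-- The reflection as a linear isometry equivalence. -/
def sigmaE : E3 ≃ₗᵢ[ℝ] E3 :=
  ⟨sigmaL, by
    intro x
    rw [EuclideanSpace.norm_eq, EuclideanSpace.norm_eq]
    congr 1
    refine Finset.sum_congr rfl fun i _ => ?_
    by_cases h : i = 2 <;> simp [h]⟩

@[simp] lemma sigmaE_apply (x : E3) (i : Fin 3) :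
    sigmaE x i = if i = 2 then -x i else x i := rfl

lemma sigmaE_single (i : Fin 3) :
    sigmaE (EuclideanSpace.single i 1) =
      (if i = 2 then (-1 : ℝ) else 1) • EuclideanSpace.single i 1 := by
  ext j
  by_cases hj : j = 2 <;> by_cases hi : i = 2 <;>
    simp [hj, hi, EuclideanSpace.single_apply, PiLp.smul_apply, smul_eq_mul] <;>
    split_ifs <;> simp_all

/-! ### Behaviour of the building blocks under the reflection -/

lemma sphRho_sigma (x : E3) : sphRho (sigmaE x) = sphRho x := by
  simp [sphRho]

lemma sphPhi_sigma_cos (m : ℕ) (x : E3) :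
    Real.cos (m * sphPhi (sigmaE x)) = Real.cos (m * sphPhi x) := by
  have h : (⟨(sigmaE x) 1, (sigmaE x) 2⟩ : ℂ) = (starRingEnd ℂ) ⟨x 1, x 2⟩ := by
    apply Complex.ext <;> simp [Complex.conj_re, Complex.conj_im]
  unfold sphPhi
  rw [h, Complex.arg_conj]
  split_ifs with hpi
  · rw [hpi]
  · rw [mul_neg, Real.cos_neg]

lemma sphPhi_sigma_sin (m : ℕ) (x : E3) :
    Real.sin (m * sphPhi (sigmaE x)) = -Real.sin (m * sphPhi x) := by
  have h : (⟨(sigmaE x) 1, (sigmaE x) 2⟩ : ℂ) = (starRingEnd ℂ) ⟨x 1, x 2⟩ := by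
    apply Complex.ext <;> simp [Complex.conj_re, Complex.conj_im]
  unfold sphPhi
  rw [h, Complex.arg_conj]
  split_ifs with hpi
  · rw [hpi, Real.sin_nat_mul_pi, neg_zero]
  · rw [mul_neg, Real.sin_neg]

lemma solidU_sigma (n : ℤ) (m : ℕ) (sgn : Bool) (x : E3) :
    solidU n m sgn (sigmaE x) = (if sgn then 1 else -1 : ℝ) * solidU n m sgn x := by
  have h0 : (sigmaE x) 0 = x 0 := by simp
  unfold solidU PhiFac
  rw [sphRho_sigma, h0]
  cases sgn
  · simp only [Bool.false_eq_true, if_false, sphPhi_sigma_sin]; ring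
  · simp only [if_true, sphPhi_sigma_cos]; ring

/-! ### Derivatives -/

/-- Real partial derivative. -/
def pdr (i : Fin 3) (u : E3 → ℝ) (x : E3) : ℝ :=
  fderiv ℝ u x (EuclideanSpace.single i 1)

lemma pd_coe (u : E3 → ℝ) (i : Fin 3) (x : E3) :
    pd i (fun y => ((u y : ℝ) : H)) x = ((pdr i u x : ℝ) : H) := by
  classical
  set c : ℝ →L[ℝ] H := (Algebra.linearMap ℝ H).toContinuousLinearMap with hc
  have hcoe : ∀ r : ℝ, c r = (r : H) := by
    intro r
    simp [hc, QuaternionAlgebra.coe_algebraMap]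
  have hfun : (fun y => ((u y : ℝ) : H)) = fun y => c (u y) := by
    funext y; rw [hcoe]
  by_cases h : DifferentiableAt ℝ u x
  · have hd : HasFDerivAt (fun y => c (u y)) (c.comp (fderiv ℝ u x)) x :=
      (c.hasFDerivAt).comp x h.hasFDerivAt
    rw [pd, hfun, hd.fderiv]
    simp [pdr, hcoe]
  · have h2 : ¬ DifferentiableAt ℝ (fun y => c (u y)) x := by
      intro hd
      apply h
      set r : H →L[ℝ] ℝ := LinearMap.toContinuousLinearMap
        ((QuaternionAlgebra.reₗ (-1) 0 (-1) : Quaternion ℝ →ₗ[ℝ] ℝ)) with hr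
      have : u = fun y => r (c (u y)) := by
        funext y
        rw [hcoe]
        rfl
      rw [this]
      exact (r.differentiableAt).comp x hd
    rw [pd, hfun, fderiv_zero_of_not_differentiableAt h2,
      pdr, fderiv_zero_of_not_differentiableAt h]
    simp

lemma Xmon_eq (n : ℤ) (m : ℕ) (sgn : Bool) (x : E3) :
    Xmon n m sgn x =
      ((pdr 0 (solidU (n+1) m sgn) x : ℝ) : H)
        - qe1 * ((pdr 1 (solidU (n+1) m sgn) x : ℝ) : H)
        - qe2 * ((pdr 2 (solidU (n+1) m sgn) x : ℝ) : H) := by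
  have h : solidUq (n+1) m sgn = fun y => ((solidU (n+1) m sgn y : ℝ) : H) := rfl
  rw [Xmon, Dop, h, pd_coe, pd_coe, pd_coe]

lemma qip_formula (a0 a1 a2 b0 b1 b2 : ℝ) :
    qip (star (((a0 : ℝ) : H) - qe1 * ((a1 : ℝ) : H) - qe2 * ((a2 : ℝ) : H)))
        (((b0 : ℝ) : H) - qe1 * ((b1 : ℝ) : H) - qe2 * ((b2 : ℝ) : H))
      = a0 * b0 - a1 * b1 - a2 * b2 := by
  simp only [qip, Quaternion.re_sub, Quaternion.imI_sub, Quaternion.imJ_sub,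
    Quaternion.re_mul, Quaternion.imI_mul, Quaternion.imJ_mul, Quaternion.re_star,
    Quaternion.imI_star, Quaternion.imJ_star, Quaternion.re_coe, Quaternion.imI_coe,
    Quaternion.imJ_coe, Quaternion.imK_coe]
  simp only [qe1, qe2]
  ring

/-- Chain rule for `pdr` with the reflection. -/
lemma pdr_comp_sigma (u : E3 → ℝ) (i : Fin 3) (x : E3) :
    pdr i (fun y => u (sigmaE y)) x =
      (if i = 2 then (-1 : ℝ) else 1) * pdr i u (sigmaE x) := by
  have h : (fun y => u (sigmaE y)) = u ∘ (sigmaE.toContinuousLinearEquiv : E3 ≃L[ℝ] E3) := rfl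
  rw [pdr, h, ContinuousLinearEquiv.comp_right_fderiv]
  have hx : (sigmaE.toContinuousLinearEquiv : E3 →L[ℝ] E3) (EuclideanSpace.single i 1)
      = (if i = 2 then (-1 : ℝ) else 1) • EuclideanSpace.single i 1 := sigmaE_single i
  rw [ContinuousLinearMap.coe_comp', Function.comp_apply, hx, ContinuousLinearMap.map_smul]
  rw [pdr, smul_eq_mul]
  rfl

lemma pdr_sigma_plus (n : ℤ) (m : ℕ) (i : Fin 3) (x : E3) :
    pdr i (solidU n m true) (sigmaE x)
      = (if i = 2 then (-1 : ℝ) else 1) * pdr i (solidU n m true) x := by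
  have hfun : (fun y => solidU n m true (sigmaE y)) = solidU n m true := by
    funext y; rw [solidU_sigma]; simp
  have h := pdr_comp_sigma (solidU n m true) i x
  rw [hfun] at h
  by_cases hi : i = 2 <;> simp [hi] at h ⊢ <;> linarith

lemma pdr_sigma_minus (n : ℤ) (m : ℕ) (i : Fin 3) (x : E3) :
    pdr i (solidU n m false) (sigmaE x)
      = -((if i = 2 then (-1 : ℝ) else 1) * pdr i (solidU n m false) x) := by
  have hfun : (fun y => solidU n m false (sigmaE y)) = fun y => -(solidU n m false y) := by
    funext y; rw [solidU_sigma]; simp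
  have h := pdr_comp_sigma (solidU n m false) i x
  rw [hfun] at h
  have hneg : pdr i (fun y => -(solidU n m false y)) x = -(pdr i (solidU n m false) x) := by
    rw [pdr, pdr, fderiv_fun_neg]; simp
  rw [hneg] at h
  by_cases hi : i = 2 <;> simp [hi] at h ⊢ <;> linarith

/-- The integrand is odd under the reflection. -/
lemma integrand_odd (n₁ n₂ : ℤ) (m₁ m₂ : ℕ) (s : Bool) (x : E3) :
    qip (star (Xmon n₁ m₁ s (sigmaE x))) (Xmon n₂ m₂ (!s) (sigmaE x))
      = -qip (star (Xmon n₁ m₁ s x)) (Xmon n₂ m₂ (!s) x) := by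
  cases s <;>
  · rw [Xmon_eq, Xmon_eq, Xmon_eq n₁ m₁ _ x, Xmon_eq n₂ m₂ _ x, qip_formula, qip_formula]
    simp only [Bool.not_false, Bool.not_true]
    rw [pdr_sigma_plus, pdr_sigma_plus, pdr_sigma_plus,
      pdr_sigma_minus, pdr_sigma_minus, pdr_sigma_minus]
    simp only [Fin.reduceEq, reduceIte]
    ring

/-! ### Integral vanishing by oddness -/

lemma integral_zero_of_odd {S : Set E3} (hS : sigmaE ⁻¹' S = S) (g : E3 → ℝ)
    (hg : ∀ x, g (sigmaE x) = -g x) : (∫ x in S, g x) = 0 := by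
  have hmp : MeasurePreserving (sigmaE : E3 → E3) := sigmaE.measurePreserving
  have hemb : MeasurableEmbedding (sigmaE : E3 → E3) :=
    sigmaE.toHomeomorph.measurableEmbedding
  have h1 : (∫ x in S, g (sigmaE x)) = ∫ x in S, g x := by
    conv_lhs => rw [← hS]
    exact hmp.setIntegral_preimage_emb hemb g S
  have h2 : (∫ x in S, g (sigmaE x)) = -∫ x in S, g x := by
    simp only [hg]
    exact integral_neg g
  linarith [h1.symm.trans h2]

lemma sigma_ball : sigmaE ⁻¹' (Metric.ball (0 : E3) 1) = Metric.ball (0 : E3) 1 := by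
  ext x
  simp [Metric.mem_ball, dist_eq_norm, sigmaE.norm_map]

lemma sigma_extB : sigmaE ⁻¹' extB = extB := by
  ext x
  simp [extB, sigmaE.norm_map]

/-- orthogonality of basic antimonogenics `X̄` of one parity with
basic monogenics `X` of the other parity, for distinct index pairs, both on the
unit ball (`n ≥ 1`) and on the exterior (`n ≤ -2`). -/
theorem stmt12 (n₁ n₂ : ℤ) (m₁ m₂ : ℕ) (hne : (n₁, m₁) ≠ (n₂, m₂)) :
    ((1 ≤ n₁ ∧ 1 ≤ n₂ ∧ (m₁ : ℤ) ≤ n₁ + 1 ∧ (m₂ : ℤ) ≤ n₂ + 1) →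
      (∫ x in Metric.ball (0 : E3) 1, qip (star (Xmon n₁ m₁ true x)) (Xmon n₂ m₂ false x)) = 0 ∧
      (∫ x in Metric.ball (0 : E3) 1, qip (star (Xmon n₁ m₁ false x)) (Xmon n₂ m₂ true x)) = 0) ∧
    ((n₁ ≤ -2 ∧ n₂ ≤ -2 ∧ (m₁ : ℤ) ≤ -n₁ - 2 ∧ (m₂ : ℤ) ≤ -n₂ - 2) →
      (∫ x in extB, qip (star (Xmon n₁ m₁ true x)) (Xmon n₂ m₂ false x)) = 0 ∧
      (∫ x in extB, qip (star (Xmon n₁ m₁ false x)) (Xmon n₂ m₂ true x)) = 0) := by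
  refine ⟨fun _ => ⟨?_, ?_⟩, fun _ => ⟨?_, ?_⟩⟩
  · exact integral_zero_of_odd sigma_ball _ (integrand_odd n₁ n₂ m₁ m₂ true)
  · exact integral_zero_of_odd sigma_ball _ (integrand_odd n₁ n₂ m₁ m₂ false)
  · exact integral_zero_of_odd sigma_extB _ (integrand_odd n₁ n₂ m₁ m₂ true)
  · exact integral_zero_of_odd sigma_extB _ (integrand_odd n₁ n₂ m₁ m₂ false)

end
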